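/- arXiv:2502.15037 — 5 statements merged into one kernel-verified Lean document; each statement's English description precedes it below -/
import Mathlib

section
/- Let n ≥ 2 and fix, for each edge index j ∈ {0, …, n−2}, vectors b₁^j, b₂^j ∈ ℝ³, and for each vertex index k ∈ {1, …, n−1} a curvature binormal vector κb^k ∈ ℝ³ and undeformed material curvatures ω̄^{(k,j)} ∈ ℝ² for j ∈ {k−1, k}. Let B be a fixed symmetric 2×2 real matrix. For θ = (θ^0, …, θ^{n−2}) ∈ ℝ^{n−1}, define m₁^j(θ^j) = (cos θ^j) b₁^j + (sin θ^j) b₂^j, m₂^j(θ^j) = −(sin θ^j) b₁^j + (cos θ^j) b₂^j, ω^{(k,j)}(θ) = ( κb^k · m₁^j(θ^j), κb^k · m₂^j(θ^j) ) ∈ ℝ², and the bending energy P_bend(θ) = Σ_{k=1}^{n−1} Σ_{j=k−1}^{k} (1/2) (ω^{(k,j)}(θ) − ω̄^{(k,j)})ᵀ B (ω^{(k,j)}(θ) − ω̄^{(k,j)}). Then for every index i with 1 ≤ i ≤ n−2, the partial derivative of P_bend with respect to θ^i exists and equals Σ_{k=i}^{i+1} ( B (ω^{(k,i)}(θ) −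 ω̄^{(k,i)}) )ᵀ J ω^{(k,i)}(θ), where J is the 2×2 matrix with first row (0, 1) and second row (−1, 0). -/
open scoped Matrix

/-- Material frame vector `m₁(θ) = (cos θ) b₁ + (sin θ) b₂`. -/
noncomputable def matFrame1 (b₁ b₂ : Fin 3 → ℝ) (s : ℝ) : Fin 3 → ℝ :=
  Real.cos s • b₁ + Real.sin s • b₂

/-- Material frame vector `m₂(θ) = −(sin θ) b₁ + (cos θ) b₂`. -/
noncomputable def matFrame2 (b₁ b₂ : Fin 3 → ℝ) (s : ℝ) : Fin 3 → ℝ :=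
  -Real.sin s • b₁ + Real.cos s • b₂

/-- Material curvature `ω = (κb · m₁(θ), κb · m₂(θ)) ∈ ℝ²`. -/
noncomputable def matCurv (κb b₁ b₂ : Fin 3 → ℝ) (s : ℝ) : Fin 2 → ℝ :=
  ![κb ⬝ᵥ matFrame1 b₁ b₂ s, κb ⬝ᵥ matFrame2 b₁ b₂ s]

/-- The bending potential energy
`P_bend(θ) = Σ_{k=1}^{n−1} Σ_{j=k−1}^{k} (1/2)(ω^{(k,j)}(θ) − wb^{(k,j)})ᵀ B (ω^{(k,j)}(θ) − wb^{(k,j)})`. -/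
noncomputable def Pbend (n : ℕ) (b₁ b₂ κb : ℕ → Fin 3 → ℝ)
    (ωbar : ℕ → ℕ → Fin 2 → ℝ) (B : Matrix (Fin 2) (Fin 2) ℝ) (θ : ℕ → ℝ) : ℝ :=
  ∑ k ∈ Finset.Icc 1 (n - 1), ∑ j ∈ Finset.Icc (k - 1) k,
    (1 / 2) * ((matCurv (κb k) (b₁ j) (b₂ j) (θ j) - ωbar k j) ⬝ᵥ
      B.mulVec (matCurv (κb k) (b₁ j) (b₂ j) (θ j) - ωbar k j))

/-- The partial derivative of the bending energy with respect to `θ^i`,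
for `1 ≤ i ≤ n − 2`, exists and equals
`Σ_{k=i}^{i+1} (B (ω^{(k,i)}(θ) − wb^{(k,i)}))ᵀ J ω^{(k,i)}(θ)` with `J = !![0,1;-1,0]`. -/
lemma matCurv_eq (κ b₁ b₂ : Fin 3 → ℝ) (s : ℝ) :
    matCurv κ b₁ b₂ s =
      ![Real.cos s * (κ ⬝ᵥ b₁) + Real.sin s * (κ ⬝ᵥ b₂),
        -Real.sin s * (κ ⬝ᵥ b₁) + Real.cos s * (κ ⬝ᵥ b₂)] := by
  funext j
  fin_cases j <;>
    simp [matCurv, matFrame1, matFrame2, dotProduct, Fin.sum_univ_three] <;> ring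

lemma key_hasDerivAt (κ b₁ b₂ : Fin 3 → ℝ) (wb : Fin 2 → ℝ)
    (B : Matrix (Fin 2) (Fin 2) ℝ) (hB : B 1 0 = B 0 1) (t : ℝ) :
    HasDerivAt (fun s : ℝ => (1 / 2) * ((matCurv κ b₁ b₂ s - wb) ⬝ᵥ
        B.mulVec (matCurv κ b₁ b₂ s - wb)))
      ((B.mulVec (matCurv κ b₁ b₂ t - wb)) ⬝ᵥ
        ((!![(0 : ℝ), 1; -1, 0]).mulVec (matCurv κ b₁ b₂ t))) t := by
  obtain ⟨p, hp⟩ : ∃ p, κ ⬝ᵥ b₁ = p := ⟨_, rfl⟩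
  obtain ⟨q, hq⟩ : ∃ q, κ ⬝ᵥ b₂ = q := ⟨_, rfl⟩
  have hcurv : ∀ s : ℝ, matCurv κ b₁ b₂ s =
      ![Real.cos s * p + Real.sin s * q, -Real.sin s * p + Real.cos s * q] := by
    intro s; rw [matCurv_eq, hp, hq]
  set a := wb 0
  set b := wb 1
  have hc : HasDerivAt Real.cos (-Real.sin t) t := Real.hasDerivAt_cos t
  have hs : HasDerivAt Real.sin (Real.cos t) t := Real.hasDerivAt_sin t
  have hu : HasDerivAt (fun s => Real.cos s * p + Real.sin s * q - a)
      (-Real.sin t * p + Real.cos t * q) t :=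
    ((hc.mul_const p).add (hs.mul_const q)).sub_const a
  have hv : HasDerivAt (fun s => -Real.sin s * p + Real.cos s * q - b)
      (-Real.cos t * p + -Real.sin t * q) t := by
    have := ((hs.neg.mul_const p).add (hc.mul_const q)).sub_const b
    convert this using 1
    all_goals rfl
  have h := (((hu.mul ((hu.const_mul (B 0 0)).add (hv.const_mul (B 0 1)))).add
      (hv.mul ((hu.const_mul (B 1 0)).add (hv.const_mul (B 1 1))))).const_mul ((1:ℝ)/2))
  have heq : (fun s : ℝ => (1 / 2) * ((matCurv κ b₁ b₂ s - wb) ⬝ᵥ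
      B.mulVec (matCurv κ b₁ b₂ s - wb))) =
      (fun s : ℝ => (1/2) * ((Real.cos s * p + Real.sin s * q - a) *
          (B 0 0 * (Real.cos s * p + Real.sin s * q - a) +
           B 0 1 * (-Real.sin s * p + Real.cos s * q - b)) +
        (-Real.sin s * p + Real.cos s * q - b) *
          (B 1 0 * (Real.cos s * p + Real.sin s * q - a) +
           B 1 1 * (-Real.sin s * p + Real.cos s * q - b)))) := by
    funext s
    simp [hcurv, Matrix.mulVec, dotProduct, Fin.sum_univ_two]
    rfl
  rw [heq]
  convert h using 1
  case e'_9 =>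
    simp [hcurv, Matrix.mulVec, dotProduct, Fin.sum_univ_two]
    rw [hB]
    ring
  all_goals rfl

/-- The partial derivative of the bending energy with respect to `θ^i`,
for `1 ≤ i ≤ n − 2`, exists and equals
`Σ_{k=i}^{i+1} (B (ω^{(k,i)}(θ) − ω̄^{(k,i)}))ᵀ J ω^{(k,i)}(θ)` with `J = !![0,1;-1,0]`. -/
theorem bending_energy_partial_derivative
    (n : ℕ) (hn : 2 ≤ n) (b₁ b₂ κb : ℕ → Fin 3 → ℝ)
    (ωbar : ℕ → ℕ → Fin 2 → ℝ) (B : Matrix (Fin 2) (Fin 2) ℝ) (hB : B.IsSymm)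
    (θ : ℕ → ℝ) (i : ℕ) (hi1 : 1 ≤ i) (hi2 : i ≤ n - 2) :
    HasDerivAt (fun s : ℝ => Pbend n b₁ b₂ κb ωbar B (Function.update θ i s))
      (∑ k ∈ Finset.Icc i (i + 1),
        (B.mulVec (matCurv (κb k) (b₁ i) (b₂ i) (θ i) - ωbar k i)) ⬝ᵥ
          ((!![(0 : ℝ), 1; -1, 0]).mulVec (matCurv (κb k) (b₁ i) (b₂ i) (θ i))))
      (θ i) := by
  have hBsym : B 1 0 = B 0 1 := hB.apply 0 1
  set g : ℕ → ℝ := fun k =>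
    (B.mulVec (matCurv (κb k) (b₁ i) (b₂ i) (θ i) - ωbar k i)) ⬝ᵥ
      ((!![(0 : ℝ), 1; -1, 0]).mulVec (matCurv (κb k) (b₁ i) (b₂ i) (θ i))) with hg
  have hderiv : HasDerivAt (fun s : ℝ => Pbend n b₁ b₂ κb ωbar B (Function.update θ i s))
      (∑ k ∈ Finset.Icc 1 (n - 1), ∑ j ∈ Finset.Icc (k - 1) k,
        if j = i then g k else 0) (θ i) := by
    unfold Pbend
    apply HasDerivAt.fun_sum
    intro k _
    apply HasDerivAt.fun_sum
    intro j _
    by_cases hji : j = i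
    · subst hji
      simp only [Function.update_self, if_pos rfl]
      exact key_hasDerivAt (κb k) (b₁ j) (b₂ j) (ωbar k j) B hBsym (θ j)
    · simp only [Function.update_of_ne hji, if_neg hji]
      exact hasDerivAt_const _ _
  have hsum : (∑ k ∈ Finset.Icc 1 (n - 1), ∑ j ∈ Finset.Icc (k - 1) k,
      if j = i then g k else 0) = ∑ k ∈ Finset.Icc i (i + 1), g k := by
    have h1 : ∀ k, (∑ j ∈ Finset.Icc (k - 1) k, if j = i then g k else 0) =
        if i ∈ Finset.Icc (k - 1) k then g k else 0 := fun k =>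
      Finset.sum_ite_eq' _ i (fun _ => g k)
    simp_rw [h1]
    rw [← Finset.sum_filter]
    apply Finset.sum_congr _ (fun _ _ => rfl)
    ext k
    simp only [Finset.mem_filter, Finset.mem_Icc]
    omega
  exact hsum ▸ hderiv
end

section
/- Under the combined hypotheses of the bending and twisting settings — namely, fixed vectors b₁^j, b₂^j ∈ ℝ³ (j = 0, …, n−2), fixed κb^k ∈ ℝ³ and ω̄^{(k,j)} ∈ ℝ², a symmetric 2×2 matrix B, and twisting stiffnesses β^k ∈ ℝ — define the total potential energy P(θ) = P_bend(θ) + P_twist(θ) on ℝ^{n−1}, where P_bend(θ) = Σ_{k=1}^{n−1} Σ_{j=k−1}^{k} (1/2)(ω^{(k,j)}(θ) − ω̄^{(k,j)})ᵀ B (ω^{(k,j)}(θ) − ω̄^{(k,j)}) with ω^{(k,j)}(θ) = ( κb^k · m₁^j(θ^j), κb^k · m₂^j(θ^j) ), and P_twist(θ) = Σ_{k=1}^{n−1} (1/2) β^k (θ^k − θ^{k−1})². Then for every i with 1 ≤ i ≤ n−2, the partial derivative of P with respect to θ^i exists and equals Σ_{k=i}^{i+1} ( B (ω^{(k,i)}(θ)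 − ω̄^{(k,i)}) )ᵀ J ω^{(k,i)}(θ) + β^i (θ^i − θ^{i−1}) − β^{i+1} (θ^{i+1} − θ^i), where J is the 2×2 matrix with first row (0, 1) and second row (−1, 0). -/
open scoped Matrix

/-- The twisting potential energy. -/
noncomputable def Ptwist (n : ℕ) (β : ℕ → ℝ) (θ : ℕ → ℝ) : ℝ :=
  ∑ k ∈ Finset.Icc 1 (n - 1), (1 / 2) * β k * (θ k - θ (k - 1)) ^ 2

lemma bendTerm_hasDerivAt (κ b1 b2 : Fin 3 → ℝ) (w : Fin 2 → ℝ)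
    (B : Matrix (Fin 2) (Fin 2) ℝ) (hB : B.IsSymm) (t : ℝ) :
    HasDerivAt (fun s => (1/2) * ((matCurv κ b1 b2 s - w) ⬝ᵥ B.mulVec (matCurv κ b1 b2 s - w)))
      ((B.mulVec (matCurv κ b1 b2 t - w)) ⬝ᵥ ((!![(0:ℝ),1;-1,0]).mulVec (matCurv κ b1 b2 t))) t := by
  set a := κ ⬝ᵥ b1 with ha
  set c := κ ⬝ᵥ b2 with hc
  have hcurv : ∀ s, matCurv κ b1 b2 s = ![a * Real.cos s + c * Real.sin s,
      -(a * Real.sin s) + c * Real.cos s] := by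
    intro s; funext x
    fin_cases x <;>
      simp [matCurv, matFrame1, matFrame2, dotProduct, Fin.sum_univ_three, ha, hc] <;> ring
  have hB' : B 1 0 = B 0 1 := hB.apply 0 1
  have h0 : HasDerivAt (fun s => a * Real.cos s + c * Real.sin s - w 0)
      (-(a * Real.sin t) + c * Real.cos t) t := by
    have := (((Real.hasDerivAt_cos t).const_mul a).add ((Real.hasDerivAt_sin t).const_mul c)).sub_const (w 0)
    exact this.congr_deriv (by ring)
  have h1 : HasDerivAt (fun s => -(a * Real.sin s) + c * Real.cos s - w 1)
      (-(a * Real.cos t) - c * Real.sin t) t := by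
    have := ((((Real.hasDerivAt_sin t).const_mul a).neg).add ((Real.hasDerivAt_cos t).const_mul c)).sub_const (w 1)
    exact this.congr_deriv (by ring)
  have H := ((h0.mul ((h0.const_mul (B 0 0)).add (h1.const_mul (B 0 1)))).add
      (h1.mul ((h0.const_mul (B 1 0)).add (h1.const_mul (B 1 1))))).const_mul (1/2 : ℝ)
  have heq : (fun s => (1/2) * ((matCurv κ b1 b2 s - w) ⬝ᵥ B.mulVec (matCurv κ b1 b2 s - w)))
      = fun s => (1/2 : ℝ) * ((a * Real.cos s + c * Real.sin s - w 0) *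
          (B 0 0 * (a * Real.cos s + c * Real.sin s - w 0) + B 0 1 * (-(a * Real.sin s) + c * Real.cos s - w 1)) +
        (-(a * Real.sin s) + c * Real.cos s - w 1) *
          (B 1 0 * (a * Real.cos s + c * Real.sin s - w 0) + B 1 1 * (-(a * Real.sin s) + c * Real.cos s - w 1))) := by
    funext s
    simp [hcurv, Matrix.mulVec, dotProduct, Fin.sum_univ_two]
  rw [heq]
  refine H.congr_deriv ?_
  simp [hcurv, Matrix.mulVec, dotProduct, Fin.sum_univ_two, hB']
  ring

/-- The partial derivative of the total potential energy
`P = P_bend + P_twist` with respect to `θ^i`, for `1 ≤ i ≤ n − 2`, exists and equals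
`Σ_{k=i}^{i+1} (B (ω^{(k,i)}(θ) − ω̄^{(k,i)}))ᵀ J ω^{(k,i)}(θ)
  + β^i (θ^i − θ^{i−1}) − β^{i+1} (θ^{i+1} − θ^i)` with `J = !![0,1;-1,0]`. -/
theorem total_energy_partial_derivative
    (n : ℕ) (hn : 2 ≤ n) (b₁ b₂ κb : ℕ → Fin 3 → ℝ)
    (ωbar : ℕ → ℕ → Fin 2 → ℝ) (B : Matrix (Fin 2) (Fin 2) ℝ) (hB : B.IsSymm)
    (β : ℕ → ℝ) (θ : ℕ → ℝ) (i : ℕ) (hi1 : 1 ≤ i) (hi2 : i ≤ n - 2) :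
    HasDerivAt
      (fun s : ℝ =>
        Pbend n b₁ b₂ κb ωbar B (Function.update θ i s) +
          Ptwist n β (Function.update θ i s))
      ((∑ k ∈ Finset.Icc i (i + 1),
          (B.mulVec (matCurv (κb k) (b₁ i) (b₂ i) (θ i) - ωbar k i)) ⬝ᵥ
            ((!![(0 : ℝ), 1; -1, 0]).mulVec (matCurv (κb k) (b₁ i) (b₂ i) (θ i)))) +
        β i * (θ i - θ (i - 1)) - β (i + 1) * (θ (i + 1) - θ i))
      (θ i) := by

  classical
  set D : ℕ → ℝ := fun k =>
    (B.mulVec (matCurv (κb k) (b₁ i) (b₂ i) (θ i) - ωbar k i)) ⬝ᵥ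
      ((!![(0 : ℝ), 1; -1, 0]).mulVec (matCurv (κb k) (b₁ i) (b₂ i) (θ i))) with hD
  -- bending part
  have hbend : HasDerivAt (fun s => Pbend n b₁ b₂ κb ωbar B (Function.update θ i s))
      (∑ k ∈ Finset.Icc i (i + 1), D k) (θ i) := by
    have key : HasDerivAt (fun s => Pbend n b₁ b₂ κb ωbar B (Function.update θ i s))
        (∑ k ∈ Finset.Icc 1 (n - 1), ∑ j ∈ Finset.Icc (k - 1) k,
          if j = i then D k else 0) (θ i) := by
      unfold Pbend
      apply HasDerivAt.fun_sum; intro k _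
      apply HasDerivAt.fun_sum; intro j _
      by_cases hji : j = i
      · subst hji
        simp only [Function.update_self, if_pos rfl, hD]
        exact bendTerm_hasDerivAt _ _ _ _ B hB (θ j)
      · simp only [Function.update_of_ne hji, if_neg hji]
        exact hasDerivAt_const _ _
    convert key using 1
    symm
    calc ∑ k ∈ Finset.Icc 1 (n - 1), ∑ j ∈ Finset.Icc (k - 1) k, (if j = i then D k else 0)
        = ∑ k ∈ Finset.Icc 1 (n - 1), (if i ∈ Finset.Icc (k - 1) k then D k else 0) := by
          exact Finset.sum_congr rfl fun k _ => Finset.sum_ite_eq' _ i (fun _ => D k)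
      _ = ∑ k ∈ Finset.Icc 1 (n - 1), (if k ∈ Finset.Icc i (i + 1) then D k else 0) := by
          refine Finset.sum_congr rfl fun k hk => ?_
          simp only [Finset.mem_Icc] at hk
          have hiff : i ∈ Finset.Icc (k - 1) k ↔ k ∈ Finset.Icc i (i + 1) := by
            simp only [Finset.mem_Icc]; omega
          simp only [hiff]
      _ = ∑ k ∈ Finset.Icc 1 (n - 1) ∩ Finset.Icc i (i + 1), D k := by
          rw [Finset.sum_ite_mem]
      _ = ∑ k ∈ Finset.Icc i (i + 1), D k := by
          congr 1
          rw [Finset.inter_eq_right]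
          intro k hk
          simp only [Finset.mem_Icc] at *
          omega
  -- twisting part
  have htwist : HasDerivAt (fun s => Ptwist n β (Function.update θ i s))
      (β i * (θ i - θ (i - 1)) - β (i + 1) * (θ (i + 1) - θ i)) (θ i) := by
    have key : HasDerivAt (fun s => Ptwist n β (Function.update θ i s))
        (∑ k ∈ Finset.Icc 1 (n - 1),
          ((if k = i then β i * (θ i - θ (i - 1)) else 0) +
           (if k = i + 1 then -(β (i + 1) * (θ (i + 1) - θ i)) else 0))) (θ i) := by
      unfold Ptwist
      apply HasDerivAt.fun_sum; intro k hk
      simp only [Finset.mem_Icc] at hk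
      by_cases h1 : k = i
      · subst h1
        simp only [if_pos rfl, if_neg (show k ≠ k + 1 by omega),
          Function.update_self, Function.update_of_ne (show k - 1 ≠ k by omega), add_zero]
        have h := (((hasDerivAt_id (θ k)).sub_const (θ (k - 1))).pow 2).const_mul ((1/2) * β k)
        refine h.congr_deriv ?_
        norm_num; ring
      · by_cases h2 : k = i + 1
        · subst h2
          have harg : ∀ s : ℝ, Function.update θ i s (i + 1 - 1) = s := by
            intro s; simp
          simp only [if_neg h1, if_pos rfl, zero_add, harg,
            Function.update_of_ne (show i + 1 ≠ i by omega)]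
          have h := (((hasDerivAt_id (θ i)).const_sub (θ (i + 1))).pow 2).const_mul ((1/2) * β (i + 1))
          refine h.congr_deriv ?_
          norm_num; ring
        · simp only [if_neg h1, if_neg h2, add_zero,
            Function.update_of_ne h1, Function.update_of_ne (show k - 1 ≠ i by omega)]
          exact hasDerivAt_const _ _
    convert key using 1
    rw [Finset.sum_add_distrib, Finset.sum_ite_eq' _ i, Finset.sum_ite_eq' _ (i + 1)]
    rw [if_pos (by simp only [Finset.mem_Icc]; omega), if_pos (by simp only [Finset.mem_Icc]; omega)]
    ring
  have := hbend.add htwist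
  exact this.congr_deriv (by ring)
end

section
/- Let x, y ∈ ℝ³ with x ≠ y, let L ≥ 0, and let M₁, M₂ be real 3×3 matrices such that M₁ + M₂ is invertible. Set C = ‖y − x‖ − L and u = (y − x)/‖y − x‖, and define the corrections Δx = M₂ (M₁ + M₂)⁻¹ (C u) and Δy = − M₁ (M₁ + M₂)⁻¹ (C u) (matrices acting on vectors by matrix–vector multiplication). Then ‖(y + Δy) − (x + Δx)‖ = L; that is, after the correction the segment length equals its undeformed length L, so the inextensibility constraint function C_I evaluates to zero. -/
/-- For vertices `x ≠ y` in ℝ³, undeformed length `L ≥ 0`, and mass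
matrices `M₁, M₂` with `M₁ + M₂` invertible, the DEFT inextensibility corrections
`Δx = M₂ (M₁+M₂)⁻¹ (C u)` and `Δy = −M₁ (M₁+M₂)⁻¹ (C u)`, with `C = ‖y − x‖ − L` and
`u = (y − x)/‖y − x‖`, restore the edge to its undeformed length:
`‖(y + Δy) − (x + Δx)‖ = L`. -/
theorem inextensibility_correction_restores_length
    (x y : EuclideanSpace ℝ (Fin 3)) (hxy : x ≠ y) (L : ℝ) (hL : 0 ≤ L)
    (M₁ M₂ : Matrix (Fin 3) (Fin 3) ℝ) (hM : IsUnit (M₁ + M₂)) :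
    let C : ℝ := ‖y - x‖ - L
    let u : EuclideanSpace ℝ (Fin 3) := ‖y - x‖⁻¹ • (y - x)
    let Δx : EuclideanSpace ℝ (Fin 3) :=
      Matrix.toEuclideanLin (M₂ * (M₁ + M₂)⁻¹) (C • u)
    let Δy : EuclideanSpace ℝ (Fin 3) :=
      -Matrix.toEuclideanLin (M₁ * (M₁ + M₂)⁻¹) (C • u)
    ‖(y + Δy) - (x + Δx)‖ = L := by
  intro C u Δx Δy
  have hn : ‖y - x‖ ≠ 0 := norm_ne_zero_iff.mpr (sub_ne_zero.mpr hxy.symm)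
  have hinv : (M₁ + M₂) * (M₁ + M₂)⁻¹ = 1 :=
    Matrix.mul_nonsing_inv _ ((Matrix.isUnit_iff_isUnit_det _).mp hM)
  have hsum : Δx - Δy = C • u := by
    show Matrix.toEuclideanLin (M₂ * (M₁ + M₂)⁻¹) (C • u) -
        -Matrix.toEuclideanLin (M₁ * (M₁ + M₂)⁻¹) (C • u) = C • u
    rw [sub_neg_eq_add]
    have : Matrix.toEuclideanLin (M₂ * (M₁ + M₂)⁻¹) (C • u) +
        Matrix.toEuclideanLin (M₁ * (M₁ + M₂)⁻¹) (C • u)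
        = Matrix.toEuclideanLin ((M₁ + M₂) * (M₁ + M₂)⁻¹) (C • u) := by
      rw [add_mul, map_add, LinearMap.add_apply, add_comm]
    rw [this, hinv]
    simp [Matrix.toEuclideanLin_apply, Matrix.one_mulVec]
  have hkey : (y + Δy) - (x + Δx) = (‖y - x‖⁻¹ * L) • (y - x) := by
    have : (y + Δy) - (x + Δx) = (y - x) - (Δx - Δy) := by abel
    rw [this, hsum]
    show (y - x) - C • (‖y - x‖⁻¹ • (y - x)) = _
    rw [smul_smul]
    rw [sub_eq_iff_eq_add, ← add_smul]
    have : (‖y - x‖⁻¹ * L) + (C * ‖y - x‖⁻¹) = 1 := by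
      field_simp [C]
      show L + (‖y - x‖ - L) = ‖y - x‖
      ring
    rw [this, one_smul]
  rw [hkey, norm_smul]
  rw [Real.norm_eq_abs, abs_of_nonneg (by positivity)]
  field_simp
end

section
/- Let Ω_p, Ω_c ∈ ℝ³ with Ω_p ≠ Ω_c, let ε ≥ 0, and let I_p, I_c be real 3×3 matrices such that I_p + I_c is invertible. Set C = ‖Ω_p − Ω_c‖ − ε, and define ΔΩ_p = I_c (I_p + I_c)⁻¹ ( C · (Ω_c − Ω_p)/‖Ω_c − Ω_p‖ ) and ΔΩ_c = I_p (I_p + I_c)⁻¹ ( C · (Ω_p − Ω_c)/‖Ω_c − Ω_p‖ ). Then ‖(Ω_p + ΔΩ_p) − (Ω_c + ΔΩ_c)‖ = ε; that is, after the correction the mismatch between parent and child edge orientations equals exactly the tolerance ε, so the orientation constraint function C_O evaluates to zero. -/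
/-- (DEFT Theorem 4.) For parent/child edge orientations
`Ω_p ≠ Ω_c` in ℝ³, tolerance `ε ≥ 0`, and moment-of-inertia matrices `I_p, I_c` with
`I_p + I_c` invertible, the orientation corrections
`ΔΩ_p = I_c (I_p+I_c)⁻¹ (C (Ω_c − Ω_p)/‖Ω_c − Ω_p‖)` and
`ΔΩ_c = I_p (I_p+I_c)⁻¹ (C (Ω_p − Ω_c)/‖Ω_c − Ω_p‖)`, with `C = ‖Ω_p − Ω_c‖ − ε`,
reduce the orientation mismatch to exactly `ε`:
`‖(Ω_p + ΔΩ_p) − (Ω_c + ΔΩ_c)‖ = ε`. -/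
theorem junction_orientation_correction
    (Ωp Ωc : EuclideanSpace ℝ (Fin 3)) (hΩ : Ωp ≠ Ωc) (ε : ℝ) (hε : 0 ≤ ε)
    (Ip Ic : Matrix (Fin 3) (Fin 3) ℝ) (hI : IsUnit (Ip + Ic)) :
    let C : ℝ := ‖Ωp - Ωc‖ - ε
    let ΔΩp : EuclideanSpace ℝ (Fin 3) :=
      Matrix.toEuclideanLin (Ic * (Ip + Ic)⁻¹) (C • (‖Ωc - Ωp‖⁻¹ • (Ωc - Ωp)))
    let ΔΩc : EuclideanSpace ℝ (Fin 3) :=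
      Matrix.toEuclideanLin (Ip * (Ip + Ic)⁻¹) (C • (‖Ωc - Ωp‖⁻¹ • (Ωp - Ωc)))
    ‖(Ωp + ΔΩp) - (Ωc + ΔΩc)‖ = ε := by
  intro C ΔΩp ΔΩc
  have hn : ‖Ωp - Ωc‖ ≠ 0 := by
    simpa [sub_eq_zero] using hΩ
  have hnorm : ‖Ωc - Ωp‖ = ‖Ωp - Ωc‖ := norm_sub_rev _ _
  set v : EuclideanSpace ℝ (Fin 3) := C • (‖Ωc - Ωp‖⁻¹ • (Ωc - Ωp)) with hv
  have hvc : C • (‖Ωc - Ωp‖⁻¹ • (Ωp - Ωc)) = -v := by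
    rw [hv]
    simp [smul_sub, neg_sub]
  have hdiff : ΔΩp - ΔΩc = v := by
    show Matrix.toEuclideanLin (Ic * (Ip + Ic)⁻¹) v
        - Matrix.toEuclideanLin (Ip * (Ip + Ic)⁻¹) (C • (‖Ωc - Ωp‖⁻¹ • (Ωp - Ωc))) = v
    rw [hvc, map_neg, sub_neg_eq_add, ← LinearMap.add_apply]
    rw [← map_add, ← add_mul]
    have : (Ic + Ip) * (Ip + Ic)⁻¹ = 1 := by
      rw [add_comm Ic Ip, Matrix.mul_nonsing_inv _ (Matrix.isUnit_iff_isUnit_det _ |>.mp hI)]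
    rw [this]
    simp [Matrix.toEuclideanLin_apply, Matrix.one_mulVec]
  have key : (Ωp + ΔΩp) - (Ωc + ΔΩc) = (ε / ‖Ωp - Ωc‖) • (Ωp - Ωc) := by
    have h1 : (Ωp + ΔΩp) - (Ωc + ΔΩc) = (Ωp - Ωc) + (ΔΩp - ΔΩc) := by abel
    rw [h1, hdiff, hv, hnorm]
    have h2 : C • (‖Ωp - Ωc‖⁻¹ • (Ωc - Ωp)) = -((C / ‖Ωp - Ωc‖) • (Ωp - Ωc)) := by
      rw [smul_smul, div_eq_mul_inv, ← smul_neg, neg_sub]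
    rw [h2, ← sub_eq_add_neg]
    have h3 : ε / ‖Ωp - Ωc‖ = 1 - C / ‖Ωp - Ωc‖ := by
      field_simp [C]
      show ε = ‖Ωp - Ωc‖ - (‖Ωp - Ωc‖ - ε)
      ring
    rw [h3, sub_smul, one_smul]
  rw [key, norm_smul]
  rw [Real.norm_eq_abs, abs_of_nonneg (div_nonneg hε (norm_nonneg _))]
  field_simp
end

section
/- Let Ω_p, Ω_c ∈ ℝ³ with Ω_p ≠ Ω_c, let ε ≥ 0, and let i_p, i_c > 0 be real scalars. Set C = ‖Ω_p − Ω_c‖ − ε, ΔΩ_p* = (i_c/(i_p+i_c)) C (Ω_c − Ω_p)/‖Ω_c − Ω_p‖ and ΔΩ_c* = (i_p/(i_p+i_c)) C (Ω_p − Ω_c)/‖Ω_c − Ω_p‖, and define the objective g(ΔΩ_p, ΔΩ_c) = (1/2) ( ‖(Ω_p + ΔΩ_p) − (Ω_c + ΔΩ_c)‖ − ε )² for ΔΩ_p, ΔΩ_c ∈ ℝ³. Then (ΔΩ_p*, ΔΩ_c*) satisfies the angular momentum constraint i_p ΔΩ_p* + i_c ΔΩ_c* = 0 and achieves g(ΔΩ_p*,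 ΔΩ_c*) = 0, and consequently for every pair (ΔΩ_p, ΔΩ_c) ∈ ℝ³ × ℝ³ with i_p ΔΩ_p + i_c ΔΩ_c = 0 one has g(ΔΩ_p, ΔΩ_c) ≥ g(ΔΩ_p*, ΔΩ_c*); i.e., (ΔΩ_p*, ΔΩ_c*) is a global minimizer of the angular-momentum-constrained junction orientation problem. -/
/-- (DEFT Theorem 4, scalar form.) For parent/child edge orientations
`Ω_p ≠ Ω_c` in ℝ³, tolerance `ε ≥ 0`, and scalar moments of inertia `i_p, i_c > 0`, the
corrections `ΔΩ_p* = (i_c/(i_p+i_c)) C (Ω_c − Ω_p)/‖Ω_c − Ω_p‖` and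
`ΔΩ_c* = (i_p/(i_p+i_c)) C (Ω_p − Ω_c)/‖Ω_c − Ω_p‖`, with `C = ‖Ω_p − Ω_c‖ − ε`,
satisfy the angular-momentum constraint `i_p ΔΩ_p* + i_c ΔΩ_c* = 0`, achieve zero
objective value for `g(ΔΩ_p, ΔΩ_c) = (1/2)(‖(Ω_p + ΔΩ_p) − (Ω_c + ΔΩ_c)‖ − ε)²`, and
are a global minimizer of the angular-momentum-constrained junction orientation
problem. -/
theorem junction_orientation_global_minimizer
    (Ωp Ωc : EuclideanSpace ℝ (Fin 3)) (hΩ : Ωp ≠ Ωc) (ε : ℝ) (hε : 0 ≤ ε)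
    (ip ic : ℝ) (hip : 0 < ip) (hic : 0 < ic) :
    let C : ℝ := ‖Ωp - Ωc‖ - ε
    let ΔΩp' : EuclideanSpace ℝ (Fin 3) :=
      (ic / (ip + ic)) • (C • (‖Ωc - Ωp‖⁻¹ • (Ωc - Ωp)))
    let ΔΩc' : EuclideanSpace ℝ (Fin 3) :=
      (ip / (ip + ic)) • (C • (‖Ωc - Ωp‖⁻¹ • (Ωp - Ωc)))
    let g : EuclideanSpace ℝ (Fin 3) → EuclideanSpace ℝ (Fin 3) → ℝ :=
      fun ΔΩp ΔΩc => (1 / 2) * (‖(Ωp + ΔΩp) - (Ωc + ΔΩc)‖ - ε) ^ 2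
    ip • ΔΩp' + ic • ΔΩc' = 0 ∧
    g ΔΩp' ΔΩc' = 0 ∧
    ∀ ΔΩp ΔΩc : EuclideanSpace ℝ (Fin 3),
      ip • ΔΩp + ic • ΔΩc = 0 → g ΔΩp' ΔΩc' ≤ g ΔΩp ΔΩc := by
  intro C ΔΩp' ΔΩc' g
  have hn : ‖Ωc - Ωp‖ = ‖Ωp - Ωc‖ := norm_sub_rev _ _
  have hv : Ωp - Ωc ≠ 0 := sub_ne_zero.mpr hΩ
  have hn0 : ‖Ωp - Ωc‖ ≠ 0 := norm_ne_zero_iff.mpr hv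
  have hs : ip + ic ≠ 0 := by positivity
  have hval : (Ωp + ΔΩp') - (Ωc + ΔΩc') = (ε * ‖Ωp - Ωc‖⁻¹) • (Ωp - Ωc) := by
    show (Ωp + (ic / (ip + ic)) • (C • (‖Ωc - Ωp‖⁻¹ • (Ωc - Ωp)))) -
        (Ωc + (ip / (ip + ic)) • (C • (‖Ωc - Ωp‖⁻¹ • (Ωp - Ωc)))) = _
    rw [hn]
    show (Ωp + (ic / (ip + ic)) • ((‖Ωp - Ωc‖ - ε) • (‖Ωp - Ωc‖⁻¹ • (Ωc - Ωp)))) -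
        (Ωc + (ip / (ip + ic)) • ((‖Ωp - Ωc‖ - ε) • (‖Ωp - Ωc‖⁻¹ • (Ωp - Ωc)))) = _
    match_scalars <;> field_simp <;> ring
  have hg0 : g ΔΩp' ΔΩc' = 0 := by
    show (1 / 2) * (‖(Ωp + ΔΩp') - (Ωc + ΔΩc')‖ - ε) ^ 2 = 0
    rw [hval, norm_smul, Real.norm_eq_abs, abs_of_nonneg (by positivity),
      mul_assoc, inv_mul_cancel₀ hn0]
    ring
  refine ⟨?_, hg0, ?_⟩
  · show ip • ((ic / (ip + ic)) • (C • (‖Ωc - Ωp‖⁻¹ • (Ωc - Ωp)))) +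
      ic • ((ip / (ip + ic)) • (C • (‖Ωc - Ωp‖⁻¹ • (Ωp - Ωc)))) = 0
    match_scalars <;> field_simp <;> ring
  · intro ΔΩp ΔΩc _
    rw [hg0]
    positivity
end
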